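/- Let n ∈ ℕ with n > 1, let 0 ≤ γ ≤ 1/2 and 0 ≤ λ ≤ (n−1)/2 with (γ,λ) ≠ (0,0), and let SV_{n,γ,λ} : ℝ² → ℝ² be the map SV_{n,γ,λ}(x,y) = ( x(γx+λy), x( ((1−2γ)/(n−1)) x + (1 − 2λ/(n−1)) y ) ). Then: (i) if λ = 0 (so γ ≠ 0), the only non-zero fixed point of SV_{n,γ,λ} is ( 1/γ, (1−2γ)/(γ(γ−1)(n−1)) ); (ii)(a) if λ ≠ 0 and λ = (n−1)γ, the only non-zero fixed point is ( 1/(1−γ), (1−2γ)/(γ(1−γ)(n−1)) ); (ii)(b) if λ ≠ 0 and λ ≠ (n−1)γ, then for every x ∈ ℝ, the point (x, (1−γx)/λ) is a fixed point of SV_{n,γ,λ} if and only if (λ−(n−1)γ) x² + ((n−1)(γ+1)−2λ) x − (n−1) = 0, and every non-zero fixed point is of this form; in particular there are at most two non-zero fixed points, and the discriminant ((n−1)γ−2λ)² + (n−1)²(1−2γ) is nonnegative. -/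

import Mathlib

/-- The simplified gonosomal dynamical system `SV_{n,γ,λ}`. -/
noncomputable def svOp (n : ℕ) (γ l : ℝ) (p : ℝ × ℝ) : ℝ × ℝ :=
  (p.1 * (γ * p.1 + l * p.2),
   p.1 * (((1 - 2 * γ) / ((n : ℝ) - 1)) * p.1 + (1 - 2 * l / ((n : ℝ) - 1)) * p.2))

theorem svOp_fixed_points (n : ℕ) (hn : 1 < n) (γ l : ℝ)
    (hγ0 : 0 ≤ γ) (hγ1 : γ ≤ 1 / 2) (hl0 : 0 ≤ l) (hl1 : l ≤ ((n : ℝ) - 1) / 2)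
    (hne : (γ, l) ≠ (0, 0)) :
    (l = 0 →
      {p : ℝ × ℝ | svOp n γ l p = p ∧ p ≠ 0} =
        {(1 / γ, (1 - 2 * γ) / (γ * (γ - 1) * ((n : ℝ) - 1)))}) ∧
    (l ≠ 0 → l = ((n : ℝ) - 1) * γ →
      {p : ℝ × ℝ | svOp n γ l p = p ∧ p ≠ 0} =
        {(1 / (1 - γ), (1 - 2 * γ) / (γ * (1 - γ) * ((n : ℝ) - 1)))}) ∧
    (l ≠ 0 → l ≠ ((n : ℝ) - 1) * γ →
      (∀ x : ℝ,
        svOp n γ l (x, (1 - γ * x) / l) = (x, (1 - γ * x) / l) ↔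
          (l - ((n : ℝ) - 1) * γ) * x ^ 2 + (((n : ℝ) - 1) * (γ + 1) - 2 * l) * x -
              ((n : ℝ) - 1) = 0) ∧
      (∀ p : ℝ × ℝ, svOp n γ l p = p → p ≠ 0 → p.2 = (1 - γ * p.1) / l) ∧
      (∃ a b : ℝ × ℝ, {p : ℝ × ℝ | svOp n γ l p = p ∧ p ≠ 0} ⊆ {a, b}) ∧
      0 ≤ (((n : ℝ) - 1) * γ - 2 * l) ^ 2 + ((n : ℝ) - 1) ^ 2 * (1 - 2 * γ)) := by
  have hn1 : (1:ℝ) < (n:ℝ) := by exact_mod_cast hn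
  have hNpos : (0:ℝ) < (n:ℝ) - 1 := by linarith
  have hN0 : ((n:ℝ) - 1) ≠ 0 := ne_of_gt hNpos
  have hγ1' : γ - 1 ≠ 0 := by intro h; have := sub_eq_zero.mp h; linarith
  have h1γ : (1:ℝ) - γ ≠ 0 := by intro h; have := sub_eq_zero.mp h; linarith
  have hNl : ((n:ℝ) - 1) * l ≠ 0 → True := fun _ => trivial
  refine ⟨?_, ?_, ?_⟩
  ·
      intro hl
      subst hl
      have hγ : γ ≠ 0 := by
        intro h; exact hne (by simp [h])
      ext ⟨x, y⟩
      simp only [Set.mem_setOf_eq, Set.mem_singleton_iff, svOp, Prod.mk.injEq, ne_eq,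
        Prod.mk_eq_zero, not_and]
      constructor
      · rintro ⟨⟨h1, h2⟩, hp⟩
        have hx : x ≠ 0 := by
          intro h
          subst h
          simp only [zero_mul] at h2
          exact hp rfl h2.symm
        have hgx : γ * x + 0 * y = 1 := mul_left_cancel₀ hx (h1.trans (mul_one x).symm)
        rw [zero_mul, add_zero] at hgx
        have hxv : x = 1 / γ := by field_simp; linarith
        subst hxv
        refine ⟨rfl, ?_⟩
        rw [eq_div_iff (by exact mul_ne_zero (mul_ne_zero hγ hγ1') hN0)]
        field_simp at h2
        linear_combination -h2
      · rintro ⟨hx, hy⟩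
        subst hx; subst hy
        refine ⟨⟨by field_simp; ring, by field_simp; ring⟩, ?_⟩
        intro h
        exact absurd h (one_div_ne_zero hγ)
  ·
      intro hl hlγ
      have hγ : γ ≠ 0 := by
        intro h; apply hl; rw [hlγ, h, mul_zero]
      subst hlγ
      ext ⟨x, y⟩
      simp only [Set.mem_setOf_eq, Set.mem_singleton_iff, svOp, Prod.mk.injEq, ne_eq,
        Prod.mk_eq_zero, not_and]
      constructor
      · rintro ⟨⟨h1, h2⟩, hp⟩
        have hx : x ≠ 0 := by
          intro h
          subst h
          simp only [zero_mul] at h2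
          exact hp rfl h2.symm
        have hG : γ * x + ((n:ℝ) - 1) * γ * y = 1 :=
          mul_left_cancel₀ hx (h1.trans (mul_one x).symm)
        -- clear denominators in h2
        have h2' : x * ((1 - 2*γ) * x + ((n:ℝ)-1) * (1 - 2*γ) * y) = ((n:ℝ)-1) * y := by
          field_simp at h2
          linear_combination h2
        have hK : x * (1 - 2*γ) - ((n:ℝ)-1) * γ * y = 0 := by
          linear_combination γ * h2' - (x * (1 - 2*γ)) * hG
        have hx1 : x * (1 - γ) = 1 := by linear_combination hG + hK
        have hxv : x = 1 / (1 - γ) := by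
          rw [eq_div_iff h1γ]; linarith [hx1]
        subst hxv
        refine ⟨rfl, ?_⟩
        rw [eq_div_iff (mul_ne_zero (mul_ne_zero hγ h1γ) hN0)]
        field_simp at hK
        linear_combination -hK
      · rintro ⟨hx, hy⟩
        subst hx; subst hy
        refine ⟨⟨by field_simp; ring, by field_simp; ring⟩, ?_⟩
        intro h
        exact absurd h (one_div_ne_zero h1γ)
  ·
      intro hl hlγ
      have hNl : ((n:ℝ) - 1) * l ≠ 0 := mul_ne_zero hN0 hl
      have key : ∀ x : ℝ,
          svOp n γ l (x, (1 - γ * x) / l) = (x, (1 - γ * x) / l) ↔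
            (l - ((n : ℝ) - 1) * γ) * x ^ 2 + (((n : ℝ) - 1) * (γ + 1) - 2 * l) * x -
                ((n : ℝ) - 1) = 0 := by
        intro x
        simp only [svOp, Prod.mk.injEq]
        have h1 : x * (γ * x + l * ((1 - γ * x) / l)) = x := by field_simp; ring
        have e : ((n:ℝ)-1) * l *
            (x * (((1 - 2 * γ) / ((n : ℝ) - 1)) * x + (1 - 2 * l / ((n : ℝ) - 1)) * ((1 - γ * x) / l))
              - (1 - γ * x) / l) =
            (l - ((n : ℝ) - 1) * γ) * x ^ 2 + (((n : ℝ) - 1) * (γ + 1) - 2 * l) * x - ((n : ℝ) - 1) := by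
          field_simp
          ring
        constructor
        · rintro ⟨-, h2⟩
          rw [← e, sub_eq_zero.mpr h2, mul_zero]
        · intro h
          refine ⟨h1, ?_⟩
          have := e.trans h
          rcases mul_eq_zero.mp this with h' | h'
          · exact absurd h' hNl
          · exact sub_eq_zero.mp h'
      have keyy : ∀ p : ℝ × ℝ, svOp n γ l p = p → p ≠ 0 → p.2 = (1 - γ * p.1) / l := by
        rintro ⟨x, y⟩ hfix hp
        simp only [svOp, Prod.mk.injEq] at hfix
        obtain ⟨h1, h2⟩ := hfix
        have hx : x ≠ 0 := by
          intro h
          subst h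
          simp only [zero_mul] at h2
          exact hp (by simp [Prod.ext_iff, h2.symm])
        have hgx : γ * x + l * y = 1 := mul_left_cancel₀ hx (h1.trans (mul_one x).symm)
        show y = (1 - γ * x) / l
        field_simp
        linarith [hgx]
      refine ⟨key, keyy, ?_, by nlinarith⟩
      set A := l - ((n:ℝ)-1) * γ with hA
      set B := ((n:ℝ)-1) * (γ + 1) - 2 * l with hB
      set C := -((n:ℝ)-1) with hC
      have hAne : A ≠ 0 := sub_ne_zero.mpr (Ne.symm (fun h => hlγ h.symm))
      have hd0 : 0 ≤ discrim A B C := by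
        rw [discrim, hA, hB, hC]
        nlinarith [sq_nonneg (((n:ℝ)-1)*γ - 2*l), mul_nonneg (mul_self_nonneg ((n:ℝ)-1)) (by linarith : (0:ℝ) ≤ 1 - 2*γ)]
      have hdisc : discrim A B C = (Real.sqrt (discrim A B C)) * (Real.sqrt (discrim A B C)) := by
        rw [Real.mul_self_sqrt hd0]
      set s := Real.sqrt (discrim A B C) with hs
      refine ⟨((-B + s) / (2*A), (1 - γ * ((-B + s) / (2*A))) / l),
              ((-B - s) / (2*A), (1 - γ * ((-B - s) / (2*A))) / l), ?_⟩
      rintro ⟨x, y⟩ ⟨hfix, hp⟩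
      have hy := keyy (x, y) hfix hp
      simp only at hy
      subst hy
      have hq := (key x).mp hfix
      have hq' : A * (x * x) + B * x + C = 0 := by rw [hC]; linear_combination hq
      rcases (quadratic_eq_zero_iff hAne hdisc x).mp hq' with h | h
      · rw [h]; exact Set.mem_insert _ _
      · rw [h]; exact Set.mem_insert_of_mem _ rfl
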